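/- The following is equivalent to van der Waerden's theorem: if a : ℕ → ℕ is a strictly increasing sequence and there exists a twice differentiable f : ℝ⁺ → ℝ with f''(x) → 0 as x → ∞ and a(n) = f(n) + O(1), then for every k ≥ 3 the graph of a contains a k-term arithmetic progression. Concretely (the direction showing this implies van der Waerden): if ℕ = C₁ ∪ ⋯ ∪ C_r is a partition, define R(n) = j when n ∈ C_j and a(n) = rn + R(n); then a is strictly increasing, a(n) = rn + O(1) with f(x) = rx satisfying f'' ≡ 0, and any k-term AP in the graph of a with k > r forces R to be constant on a k-term AP of ℕ, giving a monochromatic k-term AP; by pigeonhole over colors there is one color class containing arbitrarily long APs. -/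
import Mathlib

theorem stmt_15
    (H : ∀ a : ℕ → ℕ, StrictMono a →
      (∃ f : ℝ → ℝ, (∀ x : ℝ, 0 < x → DifferentiableAt ℝ f x) ∧
        (∀ x : ℝ, 0 < x → DifferentiableAt ℝ (deriv f) x) ∧
        Filter.Tendsto (fun x => deriv (deriv f) x) Filter.atTop (nhds 0) ∧
        ∃ C : ℝ, ∀ n : ℕ, |(a n : ℝ) - f n| ≤ C) →
      ∀ k : ℕ, 3 ≤ k → ∃ e d : ℕ, 0 < e ∧ 0 < d ∧ ∃ D : ℕ, 0 < D ∧
        ∀ j, j + 1 < k → a (e + (j + 1) * d) = a (e + j * d) + D)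
    (r : ℕ) (hr : 0 < r) (C : ℕ → Set ℕ)
    (hcover : ∀ n : ℕ, ∃ j, j < r ∧ n ∈ C j)
    (hdisj : ∀ i j, i < r → j < r → i ≠ j → ∀ n, n ∈ C i → n ∉ C j) :
    ∃ j, j < r ∧ ∀ k : ℕ, ∃ e d : ℕ, 0 < d ∧ ∀ i, i < k → e + i * d ∈ C j := by
  -- color function
  set R : ℕ → ℕ := fun n => (hcover n).choose with hRdef
  have hRlt : ∀ n, R n < r := fun n => (hcover n).choose_spec.1
  have hRmem : ∀ n, n ∈ C (R n) := fun n => (hcover n).choose_spec.2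
  set a : ℕ → ℕ := fun n => r * n + R n with hadef
  have ha : StrictMono a := by
    apply strictMono_nat_of_lt_succ
    intro n
    have h1 := hRlt n
    simp only [hadef]
    have : r * (n + 1) = r * n + r := by ring
    rw [this]
    omega
  have hf : (∃ f : ℝ → ℝ, (∀ x : ℝ, 0 < x → DifferentiableAt ℝ f x) ∧
        (∀ x : ℝ, 0 < x → DifferentiableAt ℝ (deriv f) x) ∧
        Filter.Tendsto (fun x => deriv (deriv f) x) Filter.atTop (nhds 0) ∧
        ∃ Cc : ℝ, ∀ n : ℕ, |(a n : ℝ) - f n| ≤ Cc) := by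
    refine ⟨fun x : ℝ => (r : ℝ) * x, ?_, ?_, ?_, ?_⟩
    · intro x _; exact differentiableAt_id.const_mul _
    · intro x _
      have hd : deriv (fun x : ℝ => (r : ℝ) * x) = fun _ => (r : ℝ) := by
        funext y
        simpa using (((hasDerivAt_id y).const_mul ((r : ℝ))).deriv)
      rw [hd]; exact differentiableAt_const _
    · have hd : deriv (fun x : ℝ => (r : ℝ) * x) = fun _ => (r : ℝ) := by
        funext y
        simpa using (((hasDerivAt_id y).const_mul ((r : ℝ))).deriv)
      rw [hd]
      simp
    · refine ⟨r, fun n => ?_⟩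
      simp only [hadef]
      have h1 := hRlt n
      have : ((r * n + R n : ℕ) : ℝ) - (r : ℝ) * n = (R n : ℝ) := by push_cast; ring
      rw [this, abs_of_nonneg (by positivity)]
      exact_mod_cast h1.le
  -- main claim: for every k there is a monochromatic AP of length k
  have main : ∀ k : ℕ, ∃ j, j < r ∧ ∃ e d : ℕ, 0 < d ∧ ∀ i, i < k → e + i * d ∈ C j := by
    intro k
    set K := k + r + 3 with hK
    obtain ⟨e, d, he, hd, D, hD, hstep⟩ := H a ha hf K (by omega)
    -- derive step equation on R
    have step : ∀ j, j + 1 < K → R (e + (j + 1) * d) + r * d = R (e + j * d) + D := by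
      intro j hj
      have h := hstep j hj
      simp only [hadef] at h
      have hsplit : r * (e + (j + 1) * d) = r * (e + j * d) + r * d := by ring
      rw [hsplit] at h
      set A := r * (e + j * d)
      set B := r * d
      omega
    set c : ℤ := (D : ℤ) - (r : ℤ) * d with hc
    have key : ∀ j, j < K → (R (e + j * d) : ℤ) = (R e : ℤ) + j * c := by
      intro j
      induction j with
      | zero => intro _; simp
      | succ j ih =>
        intro hj
        have hj' : j < K := Nat.lt_of_succ_lt hj
        have h1 := step j hj
        have h2 : (R (e + (j + 1) * d) : ℤ) + (r : ℤ) * d = (R (e + j * d) : ℤ) + D := by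
          exact_mod_cast h1
        have h3 := ih hj'
        push_cast
        push_cast at h3
        rw [hc]
        rw [hc] at h3
        linarith [h3, h2, mul_add ((j:ℤ)) ((D:ℤ) - (r:ℤ)*d) 0]
      -- fallback
    -- at j = r, R bounds force c = 0
    have hrK : r < K := by omega
    have hbig := key r hrK
    have hb1 : (0 : ℤ) ≤ (R (e + r * d) : ℤ) := by positivity
    have hb2 : (R (e + r * d) : ℤ) < r := by exact_mod_cast hRlt _
    have hb3 : (0 : ℤ) ≤ (R e : ℤ) := by positivity
    have hb4 : (R e : ℤ) < r := by exact_mod_cast hRlt _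
    have hc0 : c = 0 := by
      rcases lt_trichotomy c 0 with h | h | h
      · have : c ≤ -1 := by omega
        have : (r : ℤ) * c ≤ (r : ℤ) * (-1) := by
          apply mul_le_mul_of_nonneg_left this (by exact_mod_cast hr.le)
        nlinarith
      · exact h
      · have : 1 ≤ c := by omega
        have : (r : ℤ) * 1 ≤ (r : ℤ) * c := by
          apply mul_le_mul_of_nonneg_left this (by exact_mod_cast hr.le)
        nlinarith
    refine ⟨R e, hRlt e, e, d, hd, ?_⟩
    intro i hi
    have hiK : i < K := by omega
    have := key i hiK
    rw [hc0] at this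
    simp at this
    have heq : R (e + i * d) = R e := by exact_mod_cast this
    have := hRmem (e + i * d)
    rwa [heq] at this
  -- pigeonhole over colors to get one color for all k
  set g : ℕ → Fin r := fun k => ⟨(main k).choose, (main k).choose_spec.1⟩ with hg
  haveI : Nonempty (Fin r) := ⟨⟨0, hr⟩⟩
  obtain ⟨y, hy⟩ := Finite.exists_infinite_fiber g
  refine ⟨y.1, y.2, ?_⟩
  intro k
  have hinf : (g ⁻¹' {y}).Infinite := Set.infinite_coe_iff.mp hy
  obtain ⟨k', hk', hkk'⟩ := hinf.exists_gt k
  obtain ⟨e, d, hd, hap⟩ := (main k').choose_spec.2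
  have hcol : (main k').choose = y.1 := by
    have : g k' = y := hk'
    simpa [hg] using congrArg Fin.val this
  refine ⟨e, d, hd, fun i hi => ?_⟩
  rw [← hcol]
  exact hap i (by omega)
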